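/- Let u₀ : ℝ → ℝ be bounded measurable with σ₀ := the (assumed existing, finite) limits u₀(+∞) and u₀(-∞), and let I : ℝ → ℝ be continuous with finite limits I(+∞) and I(-∞) at ±∞. Fix ν > 0 and x, and set ξ(t) = x/√(νt). Then as t → ∞, ∫_ℝ exp(-(I(√(νt)(ξ - y))/ν + y²/2)) dy converges to e^{-I(+∞)/ν} ∫_{-∞}^{ξ∞} e^{-y²/2} dy + e^{-I(-∞)/ν} ∫_{ξ∞}^{∞} e^{-y²/2} dy, where ξ∞ = lim ξ(t) = 0; i.e. the integral converges to (e^{-I(+∞)/ν} + e^{-I(-∞)/ν})·√(π/2). -/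

import Mathlib

open Real MeasureTheory Filter Set

private lemma sqrt_tendsto_atTop' : Tendsto Real.sqrt atTop atTop := by
  rw [tendsto_atTop_atTop]
  intro b
  refine ⟨b ^ 2, fun a ha => ?_⟩
  calc b ≤ |b| := le_abs_self b
  _ = Real.sqrt (b ^ 2) := (Real.sqrt_sq_eq_abs b).symm
  _ ≤ Real.sqrt a := Real.sqrt_le_sqrt ha

/-- A continuous function with limits at `±∞` is bounded. -/
private lemma bounded_of_tendsto (I : ℝ → ℝ) (hI : Continuous I) (Ip Im : ℝ)
    (hIp : Tendsto I atTop (nhds Ip)) (hIm : Tendsto I atBot (nhds Im)) :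
    ∃ C, ∀ y, |I y| ≤ C := by
  obtain ⟨A, hA⟩ := eventually_atTop.mp (hIp.eventually (eventually_abs_sub_lt Ip one_pos))
  obtain ⟨B, hB⟩ := eventually_atBot.mp (hIm.eventually (eventually_abs_sub_lt Im one_pos))
  obtain ⟨C, hC⟩ := (isCompact_Icc (a := min B A) (b := max B A)).exists_bound_of_continuousOn
    hI.continuousOn
  refine ⟨max C (max (|Ip| + 1) (|Im| + 1)), fun y => ?_⟩
  rcases le_total y (min B A) with h | h
  · have h1 := hB y (h.trans (min_le_left _ _))
    have : |I y| ≤ |I y - Im| + |Im| := by simpa using abs_add_le (I y - Im) Im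
    have : |I y| ≤ |Im| + 1 := by linarith [abs_lt.mp h1]
    exact this.trans (le_max_of_le_right (le_max_right _ _))
  rcases le_total (max B A) y with h' | h'
  · have h1 := hA y ((le_max_right B A).trans h')
    have : |I y| ≤ |I y - Ip| + |Ip| := by simpa using abs_add_le (I y - Ip) Ip
    have : |I y| ≤ |Ip| + 1 := by linarith [abs_lt.mp h1]
    exact this.trans (le_max_of_le_right (le_max_left _ _))
  · exact le_max_of_le_left (by simpa using hC y ⟨h, h'⟩)

set_option maxHeartbeats 1000000 in
theorem stmt1 (ν x : ℝ) (hν : 0 < ν)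
    (u₀ : ℝ → ℝ) (hu₀m : Measurable u₀) (hu₀b : ∃ M, ∀ y, |u₀ y| ≤ M)
    (u₀p u₀m : ℝ) (hu₀p : Tendsto u₀ atTop (nhds u₀p))
    (hu₀m' : Tendsto u₀ atBot (nhds u₀m))
    (I : ℝ → ℝ) (hI : Continuous I)
    (Ip Im : ℝ) (hIp : Tendsto I atTop (nhds Ip)) (hIm : Tendsto I atBot (nhds Im)) :
    Tendsto
      (fun t : ℝ => ∫ y : ℝ,
        Real.exp (-(I (Real.sqrt (ν * t) * (x / Real.sqrt (ν * t) - y)) / ν + y^2 / 2)))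
      atTop
      (nhds ((Real.exp (-Ip / ν) + Real.exp (-Im / ν)) * Real.sqrt (π / 2))) := by
  obtain ⟨C, hC⟩ := bounded_of_tendsto I hI Ip Im hIp hIm
  set F : ℝ → ℝ := fun y => if y < 0 then Real.exp (-(Ip / ν + y ^ 2 / 2))
    else Real.exp (-(Im / ν + y ^ 2 / 2)) with hF
  have hs : Tendsto (fun t : ℝ => Real.sqrt (ν * t)) atTop atTop :=
    sqrt_tendsto_atTop'.comp (tendsto_id.const_mul_atTop hν)
  have hg : Integrable (fun y : ℝ => Real.exp (-(1/2) * y ^ 2)) :=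
    integrable_exp_neg_mul_sq (by norm_num)
  have key : Tendsto
      (fun t : ℝ => ∫ y : ℝ,
        Real.exp (-(I (Real.sqrt (ν * t) * (x / Real.sqrt (ν * t) - y)) / ν + y^2 / 2)))
      atTop (nhds (∫ y, F y)) := by
    apply tendsto_integral_filter_of_dominated_convergence
      (fun y => Real.exp (C / ν) * Real.exp (-(1/2) * y ^ 2))
    · filter_upwards with t
      exact (Real.continuous_exp.comp (by fun_prop)).aestronglyMeasurable
    · filter_upwards with t
      filter_upwards with y
      rw [Real.norm_eq_abs, abs_of_pos (Real.exp_pos _), ← Real.exp_add]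
      apply Real.exp_le_exp.mpr
      have h1 : -(I (Real.sqrt (ν * t) * (x / Real.sqrt (ν * t) - y))) ≤ C :=
        (neg_le_abs _).trans (hC _)
      have h2 : -(I (Real.sqrt (ν * t) * (x / Real.sqrt (ν * t) - y))) / ν ≤ C / ν := by
        gcongr
      rw [neg_div] at h2
      nlinarith
    · exact hg.const_mul _
    · have hzero : (volume : Measure ℝ) {(0:ℝ)} = 0 := measure_singleton 0
      filter_upwards [compl_mem_ae_iff.mpr hzero] with y hy
      have hy0 : y ≠ 0 := hy
      have heq : ∀ᶠ t : ℝ in atTop,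
          Real.sqrt (ν * t) * (x / Real.sqrt (ν * t) - y) = x - Real.sqrt (ν * t) * y := by
        filter_upwards [eventually_gt_atTop 0] with t ht
        have hne : Real.sqrt (ν * t) ≠ 0 := ne_of_gt (Real.sqrt_pos.mpr (by positivity))
        field_simp
      rcases lt_or_gt_of_ne hy0 with hneg | hpos
      · have harg : Tendsto (fun t : ℝ => x - Real.sqrt (ν * t) * y) atTop atTop := by
          have h : Tendsto (fun t : ℝ => -(Real.sqrt (ν * t) * y)) atTop atTop :=
            tendsto_neg_atTop_iff.mpr (hs.atTop_mul_const_of_neg hneg)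
          simpa [sub_eq_add_neg] using tendsto_atTop_add_const_left atTop x h
        have hIlim : Tendsto (fun t : ℝ =>
            I (Real.sqrt (ν * t) * (x / Real.sqrt (ν * t) - y))) atTop (nhds Ip) :=
          (hIp.comp harg).congr' (heq.mono fun t h => (congrArg I h).symm)
        have := (Real.continuous_exp.tendsto _).comp
          (((hIlim.div_const ν).add (tendsto_const_nhds (x := y ^ 2 / 2))).neg)
        simpa [hF, if_pos hneg, Function.comp_def] using this
      · have harg : Tendsto (fun t : ℝ => x - Real.sqrt (ν * t) * y) atTop atBot := by
          have h : Tendsto (fun t : ℝ => -(Real.sqrt (ν * t) * y)) atTop atBot :=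
            tendsto_neg_atBot_iff.mpr (hs.atTop_mul_const hpos)
          simpa [sub_eq_add_neg] using tendsto_atBot_add_const_left atTop x h
        have hIlim : Tendsto (fun t : ℝ =>
            I (Real.sqrt (ν * t) * (x / Real.sqrt (ν * t) - y))) atTop (nhds Im) :=
          (hIm.comp harg).congr' (heq.mono fun t h => (congrArg I h).symm)
        have := (Real.continuous_exp.tendsto _).comp
          (((hIlim.div_const ν).add (tendsto_const_nhds (x := y ^ 2 / 2))).neg)
        simpa [hF, if_neg (not_lt.mpr hpos.le), Function.comp_def] using this
  -- identify the limit value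
  have hgauss : ∫ y in Ioi (0:ℝ), Real.exp (-(1/2) * y ^ 2) = Real.sqrt (π / 2) := by
    rw [integral_gaussian_Ioi]
    rw [show (π / (1/2) : ℝ) = 2 ^ 2 * (π / 2) by ring,
      Real.sqrt_mul (by positivity), Real.sqrt_sq (by norm_num)]
    ring
  have hIio : ∫ y in Iio (0:ℝ), F y = Real.exp (-Ip / ν) * Real.sqrt (π / 2) := by
    have h1 : ∫ y in Iio (0:ℝ), F y
        = ∫ y in Iio (0:ℝ), Real.exp (-Ip / ν) * Real.exp (-(1/2) * y ^ 2) := by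
      refine setIntegral_congr_fun measurableSet_Iio (fun y hy => ?_)
      rw [hF]
      simp only [if_pos (mem_Iio.mp hy)]
      rw [← Real.exp_add]
      ring_nf
    rw [h1, integral_const_mul]
    congr 1
    have h2 : ∫ y in Iio (0:ℝ), Real.exp (-(1/2) * y ^ 2)
        = ∫ y in Iic (0:ℝ), Real.exp (-(1/2) * y ^ 2) :=
      (integral_Iic_eq_integral_Iio).symm
    have h3 := integral_comp_neg_Iic (0:ℝ) (fun y => Real.exp (-(1/2) * y ^ 2))
    simp only [neg_sq, neg_zero] at h3
    rw [h2, h3, hgauss]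
  have hIci : ∫ y in Ici (0:ℝ), F y = Real.exp (-Im / ν) * Real.sqrt (π / 2) := by
    have h1 : ∫ y in Ici (0:ℝ), F y
        = ∫ y in Ici (0:ℝ), Real.exp (-Im / ν) * Real.exp (-(1/2) * y ^ 2) := by
      refine setIntegral_congr_fun measurableSet_Ici (fun y hy => ?_)
      rw [hF]
      simp only [if_neg (not_lt.mpr (mem_Ici.mp hy))]
      rw [← Real.exp_add]
      ring_nf
    rw [h1, integral_const_mul, integral_Ici_eq_integral_Ioi, hgauss]
  have hFint : ∫ y, F y = (Real.exp (-Ip / ν) + Real.exp (-Im / ν)) * Real.sqrt (π / 2) := by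
    have hintIio : IntegrableOn F (Iio 0) := by
      apply Integrable.mono' ((hg.const_mul (Real.exp (-Ip / ν))).restrict (s := Iio 0))
      · refine AEStronglyMeasurable.restrict ?_
        apply Measurable.aestronglyMeasurable
        exact Measurable.ite measurableSet_Iio (by fun_prop) (by fun_prop)
      · filter_upwards [ae_restrict_mem measurableSet_Iio] with y hy
        rw [hF, Real.norm_eq_abs]
        simp only [if_pos (mem_Iio.mp hy)]
        rw [abs_of_pos (Real.exp_pos _), ← Real.exp_add]
        apply le_of_eq; ring_nf
    have hintIci : IntegrableOn F (Ici 0) := by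
      apply Integrable.mono' ((hg.const_mul (Real.exp (-Im / ν))).restrict (s := Ici 0))
      · refine AEStronglyMeasurable.restrict ?_
        apply Measurable.aestronglyMeasurable
        exact Measurable.ite measurableSet_Iio (by fun_prop) (by fun_prop)
      · filter_upwards [ae_restrict_mem measurableSet_Ici] with y hy
        rw [hF, Real.norm_eq_abs]
        simp only [if_neg (not_lt.mpr (mem_Ici.mp hy))]
        rw [abs_of_pos (Real.exp_pos _), ← Real.exp_add]
        apply le_of_eq; ring_nf
    rw [← intervalIntegral.integral_Iio_add_Ici hintIio hintIci, hIio, hIci]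
    ring
  rwa [hFint] at key
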